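/- Let m ≤ n be positive integers and γ = (a_1,…,a_m) ∈ Γ(m,n) with γ ≠ (n−m+1,…,n), with block data k(0),…,k(t+1) and tuples ζ_0,…,ζ_t. If α ∈ Γ(m,n) satisfies α ≥ γ and α ≱ ζ_i for every 0 ≤ i ≤ t, then α = γ. -/

import Mathlib

open scoped BigOperators TensorProduct

set_option maxHeartbeats 1000000
set_option synthInstance.maxHeartbeats 400000

noncomputable section

/-- The trace ideal of an `R`-module `M`: the sum of the images of all
`R`-linear maps `M → R`. -/
def traceIdeal (R : Type*) [CommRing R] (M : Type*) [AddCommGroup M] [Module R M] :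
    Ideal R :=
  ⨆ f : M →ₗ[R] R, LinearMap.range f

/-- `Γ(m,N)`: strictly increasing `m`-tuples with entries in `{1,…,N}`,
encoded as functions `Fin m → ℕ` and ordered componentwise. -/
def GammaSet (m N : ℕ) : Set (Fin m → ℕ) :=
  {a | StrictMono a ∧ ∀ i, 1 ≤ a i ∧ a i ≤ N}

/-- Extended entries of a tuple `a ∈ Γ(m,N)`: `aext j = a_j` for `1 ≤ j ≤ m`
(1-based indexing) and `aext (m+1) = N+1`. -/
def aext (m N : ℕ) (a : Fin m → ℕ) (j : ℕ) : ℕ :=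
  if h : j - 1 < m then a ⟨j - 1, h⟩ else N + 1

/-- Block data for `γ ∈ Γ(m,N)`: `k 0 = 0`, `k` is strictly increasing on
`{0,…,t+1}` and `k 1 < ⋯ < k (t+1)` lists exactly the indices `j ∈ {1,…,m}`
with `a_{j+1} - a_j > 1` (where `a_{m+1} = N+1`). -/
def IsBlockData (m N : ℕ) (a : Fin m → ℕ) (t : ℕ) (k : ℕ → ℕ) : Prop :=
  k 0 = 0 ∧ (∀ i j, i < j → j ≤ t + 1 → k i < k j) ∧
    ∀ j, (∃ i, 1 ≤ i ∧ i ≤ t + 1 ∧ k i = j) ↔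
      (1 ≤ j ∧ j ≤ m ∧ 1 < aext m N a (j + 1) - aext m N a j)

/-- `ζ_i`: the tuple `γ` with the entry `a_{k(i+1)}` replaced by `a_{k(i+1)} + 1`. -/
def zetaT (m : ℕ) (a : Fin m → ℕ) (k : ℕ → ℕ) (i : ℕ) : Fin m → ℕ :=
  fun j => if (j : ℕ) + 1 = k (i + 1) then a j + 1 else a j

/-- `σ_i`: the strictly increasing tuple whose entry set is
`({a_1,…,a_m} ∖ {a_{k(i)}}) ∪ {a_{k(i+1)} + 1}`. -/
def sigmaT (m N : ℕ) (a : Fin m → ℕ) (k : ℕ → ℕ) (i : ℕ) : Fin m → ℕ :=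
  fun j =>
    if (j : ℕ) + 1 < k i then a j
    else if (j : ℕ) + 1 < k (i + 1) then aext m N a ((j : ℕ) + 2)
    else if (j : ℕ) + 1 = k (i + 1) then a j + 1
    else a j

/-- `κ_i = Σ_{j=0}^{i} (k(j+1) − k(j)) + Σ_{j=i}^{t} (a_{k(j+1)+1} − a_{k(j+1)} − 1)`. -/
def kappaT (m N : ℕ) (a : Fin m → ℕ) (t : ℕ) (k : ℕ → ℕ) (i : ℕ) : ℕ :=
  (∑ j ∈ Finset.range (i + 1), (k (j + 1) - k j)) +
    ∑ j ∈ Finset.Icc i t, (aext m N a (k (j + 1) + 1) - aext m N a (k (j + 1)) - 1)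

/-- `κ = max_{0 ≤ i ≤ t} κ_i`. -/
def kappaMax (m N : ℕ) (a : Fin m → ℕ) (t : ℕ) (k : ℕ → ℕ) : ℕ :=
  (Finset.range (t + 1)).sup (kappaT m N a t k)

/-- `κ' = min_{0 ≤ i ≤ t} κ_i`. -/
def kappaMin (m N : ℕ) (a : Fin m → ℕ) (t : ℕ) (k : ℕ → ℕ) : ℕ :=
  (Finset.range (t + 1)).inf' (Finset.nonempty_range_iff.mpr (Nat.succ_ne_zero t))
    (kappaT m N a t k)

/-- `i ∈ S_h`, i.e. `κ − κ_i ≥ h`. -/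
def memS (m N : ℕ) (a : Fin m → ℕ) (t : ℕ) (k : ℕ → ℕ) (h i : ℕ) : Prop :=
  h ≤ kappaMax m N a t k - kappaT m N a t k i

/-- `i ∈ U_h`: `1 ≤ i ≤ t` and exactly one of `i-1`, `i` belongs to `S_h`. -/
def memU (m N : ℕ) (a : Fin m → ℕ) (t : ℕ) (k : ℕ → ℕ) (h i : ℕ) : Prop :=
  1 ≤ i ∧ i ≤ t ∧ ¬ (memS m N a t k h i ↔ memS m N a t k h (i - 1))

/-- The maximal minor `[a]` of the generic `m × n` matrix `(X_{uv})`
(rows `1,…,m`, columns `a_1,…,a_m`), inside `B[X_{ij} : i,j ≥ 1]`. -/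
def minor (B : Type*) [CommRing B] (m : ℕ) (a : Fin m → ℕ) : MvPolynomial (ℕ × ℕ) B :=
  (Matrix.of fun u v : Fin m => MvPolynomial.X ((u : ℕ) + 1, a v)).det

/-- `G_B(X)`: the `B`-subalgebra generated by all maximal minors `[a]`, `a ∈ Γ(m,n)`. -/
def schubertAlgebra (B : Type*) [CommRing B] (m n : ℕ) :
    Subalgebra B (MvPolynomial (ℕ × ℕ) B) :=
  Algebra.adjoin B ((fun a => minor B m a) '' GammaSet m n)

lemma minor_mem (B : Type*) [CommRing B] (m n : ℕ) {a : Fin m → ℕ}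
    (ha : a ∈ GammaSet m n) : minor B m a ∈ schubertAlgebra B m n :=
  Algebra.subset_adjoin ⟨a, ha, rfl⟩

/-- `J_B(X; γ)`: the ideal of `G_B(X)` generated by all `[δ]` with `δ ≱ γ`. -/
def JIdeal (B : Type*) [CommRing B] (m n : ℕ) (γ : Fin m → ℕ) :
    Ideal (schubertAlgebra B m n) :=
  Ideal.span {x | ∃ a ∈ GammaSet m n, ¬ γ ≤ a ∧
    (x : MvPolynomial (ℕ × ℕ) B) = minor B m a}

/-- The Schubert cycle `G_B(X; γ) = G_B(X)/J_B(X;γ)`. -/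
abbrev SchubertCycle (B : Type*) [CommRing B] (m n : ℕ) (γ : Fin m → ℕ) :=
  schubertAlgebra B m n ⧸ JIdeal B m n γ

/-- `J_B(x; δ) = J_B(X;δ)/J_B(X;γ)`, an ideal of `G_B(X;γ)`. -/
def JxIdeal (B : Type*) [CommRing B] (m n : ℕ) (γ δ : Fin m → ℕ) :
    Ideal (SchubertCycle B m n γ) :=
  (JIdeal B m n δ).map (Ideal.Quotient.mk (JIdeal B m n γ))

end
/-- If `α ∈ Γ(m,n)` satisfies `α ≥ γ` and `α ≱ ζ_i` for every
`0 ≤ i ≤ t`, then `α = γ`. -/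
theorem eq_of_ge_of_not_ge_zeta {m n : ℕ} (hm : 0 < m) (hmn : m ≤ n)
    (γ : Fin m → ℕ) (hγ : γ ∈ GammaSet m n)
    (hγtop : γ ≠ fun j : Fin m => n - m + 1 + (j : ℕ))
    (t : ℕ) (k : ℕ → ℕ) (hbd : IsBlockData m n γ t k)
    (α : Fin m → ℕ) (hα : α ∈ GammaSet m n) (hγα : γ ≤ α)
    (hζ : ∀ i, i ≤ t → ¬ zetaT m γ k i ≤ α) : α = γ := by
  obtain ⟨hk0, hkmono, hkiff⟩ := hbd
  obtain ⟨hγmono, hγrange⟩ := hγ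
  obtain ⟨hαmono, hαrange⟩ := hα
  have haext1 : ∀ j : Fin m, aext m n γ ((j : ℕ) + 1) = γ j := by
    intro j
    unfold aext
    rw [dif_pos (by simp : (j : ℕ) + 1 - 1 < m)]
    exact congrArg γ (Fin.ext rfl)
  -- if there is a gap right after position j, then α j ≤ γ j
  have hgap : ∀ j : Fin m,
      1 < aext m n γ ((j : ℕ) + 1 + 1) - aext m n γ ((j : ℕ) + 1) → α j ≤ γ j := by
    intro j hg
    obtain ⟨i, hi1, hi2, hki⟩ := (hkiff ((j : ℕ) + 1)).mpr
      ⟨by omega, by have := j.isLt; omega, hg⟩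
    have hnz := hζ (i - 1) (by omega)
    rw [Pi.le_def] at hnz
    push_neg at hnz
    obtain ⟨j0, hj0⟩ := hnz
    have hk' : k (i - 1 + 1) = (j : ℕ) + 1 := by
      rw [show i - 1 + 1 = i by omega]; exact hki
    unfold zetaT at hj0
    by_cases hc : (j0 : ℕ) + 1 = k (i - 1 + 1)
    · rw [if_pos hc] at hj0
      have hje : j0 = j := Fin.ext (by omega)
      rw [hje] at hj0
      omega
    · rw [if_neg hc] at hj0
      exact absurd hj0 (not_lt.mpr (hγα j0))
  -- downward induction: if m ≤ j + 1 + d then α j ≤ γ j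
  have aux : ∀ d : ℕ, ∀ j : Fin m, m ≤ (j : ℕ) + 1 + d → α j ≤ γ j := by
    intro d
    induction d with
    | zero =>
      intro j hj
      by_cases hg : 1 < aext m n γ ((j : ℕ) + 1 + 1) - aext m n γ ((j : ℕ) + 1)
      · exact hgap j hg
      · have hjm : (j : ℕ) + 1 = m := by have := j.isLt; omega
        have h2 : aext m n γ ((j : ℕ) + 1 + 1) = n + 1 := by
          unfold aext
          rw [dif_neg (by omega)]
        rw [h2, haext1 j] at hg
        have hjn : γ j ≤ n := (hγrange j).2
        have : α j ≤ n := (hαrange j).2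
        omega
    | succ d ih =>
      intro j hj
      by_cases hg : 1 < aext m n γ ((j : ℕ) + 1 + 1) - aext m n γ ((j : ℕ) + 1)
      · exact hgap j hg
      · by_cases hjm : (j : ℕ) + 1 < m
        · set j' : Fin m := ⟨(j : ℕ) + 1, hjm⟩ with hj'
          have h2 : aext m n γ ((j : ℕ) + 1 + 1) = γ j' := haext1 j'
          rw [h2, haext1 j] at hg
          have hlt : γ j < γ j' := hγmono (by simp [hj', Fin.lt_def])
          have hαlt : α j < α j' := hαmono (by simp [hj', Fin.lt_def])
          have hih : α j' ≤ γ j' := ih j' (by simp [hj']; omega)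
          omega
        · have h2 : aext m n γ ((j : ℕ) + 1 + 1) = n + 1 := by
            unfold aext
            rw [dif_neg (by omega)]
          rw [h2, haext1 j] at hg
          have hjn : γ j ≤ n := (hγrange j).2
          have : α j ≤ n := (hαrange j).2
          omega
  funext j
  exact le_antisymm (aux m j (by omega)) (hγα j)
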